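/- If p satisfies the cluster expansion condition p_i ≤ y_i / Y_{Γ⁺(i)} for positive reals y_1,...,y_n, then the Shearer coefficients satisfy q̆_S / q̆_{S∖{a}} ≥ Y_{S^c} / Y_{(S∖{a})^c} for all a ∈ S ⊆ [n] (in particular q̆_S > 0 for all S). -/

import Mathlib

open Finset MeasureTheory

/-- `I` is an independent set of `G`. -/
def Indep {n : ℕ} (G : SimpleGraph (Fin n)) (I : Finset (Fin n)) : Prop :=
  ∀ i ∈ I, ∀ j ∈ I, ¬ G.Adj i j

instance {n : ℕ} (G : SimpleGraph (Fin n)) [DecidableRel G.Adj] (I : Finset (Fin n)) :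
    Decidable (Indep G I) := by unfold Indep; infer_instance

/-- Closed neighborhood `Γ⁺(a)`. -/
def Gp {n : ℕ} (G : SimpleGraph (Fin n)) [DecidableRel G.Adj] (a : Fin n) : Finset (Fin n) :=
  insert a (G.neighborFinset a)

/-- Shearer coefficient `q̆_S`. -/
def qb {n : ℕ} (G : SimpleGraph (Fin n)) [DecidableRel G.Adj] (p : Fin n → ℝ)
    (S : Finset (Fin n)) : ℝ :=
  ∑ I ∈ S.powerset.filter (fun I => Indep G I), (-1 : ℝ) ^ I.card * ∏ i ∈ I, p i

/-- Cluster-expansion polynomial `Y_S`. -/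
def Yf {n : ℕ} (G : SimpleGraph (Fin n)) [DecidableRel G.Adj] (y : Fin n → ℝ)
    (S : Finset (Fin n)) : ℝ :=
  ∑ I ∈ S.powerset.filter (fun I => Indep G I), ∏ i ∈ I, y i

set_option linter.unusedSectionVars false
variable {n : ℕ} (G : SimpleGraph (Fin n)) [DecidableRel G.Adj]

lemma indep_subset {I J : Finset (Fin n)} (h : Indep G I) (hJ : J ⊆ I) : Indep G J :=
  fun i hi j hj => h i (hJ hi) j (hJ hj)

lemma Yf_pos {y : Fin n → ℝ} (hy : ∀ i, 0 < y i) (S : Finset (Fin n)) : 0 < Yf G y S := by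
  apply Finset.sum_pos'
  · intro I _; exact le_of_lt (Finset.prod_pos fun i _ => hy i)
  · refine ⟨∅, ?_, ?_⟩
    · exact Finset.mem_filter.2 ⟨Finset.empty_mem_powerset _, by simp [Indep]⟩
    · simp
  
lemma Yf_mono {y : Fin n → ℝ} (hy : ∀ i, 0 ≤ y i) {S T : Finset (Fin n)} (h : S ⊆ T) :
    Yf G y S ≤ Yf G y T := by
  apply Finset.sum_le_sum_of_subset_of_nonneg
  · exact Finset.filter_subset_filter _ (Finset.powerset_mono.2 h)
  · intro I _ _; exact Finset.prod_nonneg fun i _ => hy i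

lemma qb_eq_Yf (p : Fin n → ℝ) (S : Finset (Fin n)) : qb G p S = Yf G (fun i => -p i) S := by
  unfold qb Yf
  refine Finset.sum_congr rfl fun I _ => ?_
  rw [← Finset.prod_const, ← Finset.prod_mul_distrib]
  simp

lemma Yf_insert (y : Fin n → ℝ) {a : Fin n} {T : Finset (Fin n)} (ha : a ∉ T) :
    Yf G y (insert a T) = Yf G y T + y a * Yf G y (T \ G.neighborFinset a) := by
  classical
  unfold Yf
  rw [← Finset.sum_filter_add_sum_filter_not
    ((insert a T).powerset.filter (fun I => Indep G I)) (fun I => a ∉ I)]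
  congr 1
  · -- sets not containing a
    apply Finset.sum_congr
    · ext I
      simp only [Finset.mem_filter, Finset.mem_powerset]
      constructor
      · rintro ⟨⟨hsub, hind⟩, haI⟩
        exact ⟨fun x hx => by
          have := hsub hx; simp only [Finset.mem_insert] at this
          rcases this with rfl | h; exact absurd hx haI; exact h, hind⟩
      · rintro ⟨hsub, hind⟩
        exact ⟨⟨hsub.trans (Finset.subset_insert a T), hind⟩, fun h => ha (hsub h)⟩
    · intro I _; rfl
  · -- sets containing a
    rw [Finset.mul_sum]
    refine Finset.sum_bij' (fun I _ => I.erase a) (fun J _ => insert a J) ?_ ?_ ?_ ?_ ?_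
    · intro I hI
      simp only [Finset.mem_filter, Finset.mem_powerset, not_not] at hI ⊢
      obtain ⟨⟨hsub, hind⟩, haI⟩ := hI
      refine ⟨?_, indep_subset G hind (Finset.erase_subset _ _)⟩
      intro x hx
      simp only [Finset.mem_erase] at hx
      simp only [Finset.mem_sdiff, SimpleGraph.mem_neighborFinset]
      constructor
      · have := hsub hx.2; simp only [Finset.mem_insert] at this; tauto
      · intro hadj; exact hind a haI x hx.2 hadj
    · intro J hJ
      simp only [Finset.mem_filter, Finset.mem_powerset, not_not] at hJ ⊢
      obtain ⟨hsub, hind⟩ := hJ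
      refine ⟨⟨?_, ?_⟩, Finset.mem_insert_self _ _⟩
      · intro x hx
        simp only [Finset.mem_insert] at hx ⊢
        rcases hx with h | h
        · left; exact h
        · right; exact (Finset.mem_sdiff.1 (hsub h)).1
      · intro i hi j hj
        simp only [Finset.mem_insert] at hi hj
        rcases hi with rfl | hi <;> rcases hj with rfl | hj
        · exact G.irrefl
        · exact fun hadj => (Finset.mem_sdiff.1 (hsub hj)).2
            (by rwa [SimpleGraph.mem_neighborFinset])
        · exact fun hadj => (Finset.mem_sdiff.1 (hsub hi)).2
            (by rw [SimpleGraph.mem_neighborFinset]; exact hadj.symm)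
        · exact hind i hi j hj
    · intro I hI
      simp only [Finset.mem_filter, not_not] at hI
      exact Finset.insert_erase hI.2
    · intro J hJ
      simp only [Finset.mem_filter, Finset.mem_powerset] at hJ
      have haJ : a ∉ J := fun h => ha (Finset.mem_sdiff.1 (hJ.1 h)).1
      exact Finset.erase_insert haJ
    · intro I hI
      simp only [Finset.mem_filter, not_not] at hI
      rw [← Finset.prod_insert (Finset.notMem_erase a I), Finset.insert_erase hI.2]

lemma Yf_submul {y : Fin n → ℝ} (hy : ∀ i, 0 ≤ y i) (A B : Finset (Fin n)) :
    Yf G y (A ∪ B) ≤ Yf G y A * Yf G y B := by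
  classical
  have hrec : ∀ I : Finset (Fin n), I ∩ A ∪ I \ A = I := by
    intro I; ext x; simp only [Finset.mem_union, Finset.mem_inter, Finset.mem_sdiff]; tauto
  have hinj : ∀ I ∈ (A ∪ B).powerset.filter (fun I => Indep G I),
      ∀ J ∈ (A ∪ B).powerset.filter (fun I => Indep G I),
      (fun I : Finset (Fin n) => (I ∩ A, I \ A)) I =
        (fun I : Finset (Fin n) => (I ∩ A, I \ A)) J → I = J := by
    intro I _ J _ hIJ
    simp only [Prod.mk.injEq] at hIJ
    rw [← hrec I, ← hrec J, hIJ.1, hIJ.2]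
  calc Yf G y (A ∪ B)
      = ∑ I ∈ (A ∪ B).powerset.filter (fun I => Indep G I),
          (∏ i ∈ I ∩ A, y i) * (∏ i ∈ I \ A, y i) := by
        unfold Yf
        refine Finset.sum_congr rfl fun I _ => ?_
        rw [← Finset.prod_union (Finset.disjoint_sdiff.mono_left Finset.inter_subset_right),
          hrec I]
    _ = ∑ P ∈ ((A ∪ B).powerset.filter (fun I => Indep G I)).image
          (fun I => (I ∩ A, I \ A)),
          (∏ i ∈ P.1, y i) * (∏ i ∈ P.2, y i) :=
        (Finset.sum_image (f := fun P : Finset (Fin n) × Finset (Fin n) =>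
          (∏ i ∈ P.1, y i) * (∏ i ∈ P.2, y i)) hinj).symm
    _ ≤ ∑ P ∈ (A.powerset.filter (fun I => Indep G I)) ×ˢ
          (B.powerset.filter (fun I => Indep G I)),
          (∏ i ∈ P.1, y i) * (∏ i ∈ P.2, y i) := by
        apply Finset.sum_le_sum_of_subset_of_nonneg
        · intro P hP
          simp only [Finset.mem_image] at hP
          obtain ⟨I, hI, rfl⟩ := hP
          simp only [Finset.mem_filter, Finset.mem_powerset] at hI
          simp only [Finset.mem_product, Finset.mem_filter, Finset.mem_powerset]
          refine ⟨⟨Finset.inter_subset_right, indep_subset G hI.2 Finset.inter_subset_left⟩,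
            ⟨?_, indep_subset G hI.2 Finset.sdiff_subset⟩⟩
          intro x hx
          rcases Finset.mem_sdiff.1 hx with ⟨hxI, hxA⟩
          rcases Finset.mem_union.1 (hI.1 hxI) with h | h
          · exact absurd h hxA
          · exact h
        · intro P _ _
          exact mul_nonneg (Finset.prod_nonneg fun i _ => hy i)
            (Finset.prod_nonneg fun i _ => hy i)
    _ = Yf G y A * Yf G y B := by
        rw [Finset.sum_product]; unfold Yf; rw [Finset.sum_mul_sum]

lemma sdiff_Gp (S : Finset (Fin n)) (a : Fin n) :
    S \ Gp G a = (S.erase a) \ G.neighborFinset a := by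
  ext x
  simp only [Gp, Finset.mem_sdiff, Finset.mem_insert, Finset.mem_erase]
  tauto

lemma qb_rec (p : Fin n → ℝ) {S : Finset (Fin n)} {a : Fin n} (ha : a ∈ S) :
    qb G p S = qb G p (S.erase a) - p a * qb G p (S \ Gp G a) := by
  rw [qb_eq_Yf, qb_eq_Yf, qb_eq_Yf, ← Finset.insert_erase ha,
    Yf_insert G _ (Finset.notMem_erase a S), Finset.insert_erase ha, sdiff_Gp]
  ring

lemma compl_erase {S : Finset (Fin n)} {a : Fin n} (ha : a ∈ S) :
    (Finset.univ \ S.erase a : Finset (Fin n)) = insert a (Finset.univ \ S) := by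
  ext x
  simp only [Finset.mem_sdiff, Finset.mem_univ, Finset.mem_erase, Finset.mem_insert, true_and]
  by_cases hx : x = a <;> simp [hx, ha]

theorem cluster_implies_shearer {n : ℕ} (G : SimpleGraph (Fin n)) [DecidableRel G.Adj]
    (p y : Fin n → ℝ) (hp : ∀ i, 0 < p i) (hy : ∀ i, 0 < y i)
    (hcl : ∀ i, p i ≤ y i / Yf G y (Gp G i)) :
    (∀ S : Finset (Fin n), ∀ a ∈ S,
      qb G p S / qb G p (S.erase a) ≥
        Yf G y (Finset.univ \ S) / Yf G y (Finset.univ \ S.erase a)) ∧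
    (∀ S : Finset (Fin n), 0 < qb G p S) := by
  classical
  set Yc : Finset (Fin n) → ℝ := fun S => Yf G y (Finset.univ \ S) with hYc
  have hYcpos : ∀ S, 0 < Yc S := fun S => Yf_pos G hy _
  have hqb0 : qb G p ∅ = 1 := by
    have hPE : (∅ : Finset (Fin n)).powerset.filter (fun I => Indep G I) = {∅} := by
      rw [Finset.powerset_empty, Finset.filter_singleton]
      simp [Indep]
    rw [qb, hPE]; simp
  -- main induction
  have key : ∀ m : ℕ, ∀ S : Finset (Fin n), S.card ≤ m →
      0 < qb G p S ∧ ∀ a ∈ S, Yc S * qb G p (S.erase a) ≤ qb G p S * Yc (S.erase a) := by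
    intro m
    induction m with
    | zero =>
      intro S hS
      rw [Nat.le_zero, Finset.card_eq_zero] at hS
      subst hS
      refine ⟨by rw [hqb0]; norm_num, fun a ha => absurd ha (Finset.notMem_empty a)⟩
    | succ m IH =>
      -- telescoping lemma using IH
      have tele : ∀ B X : Finset (Fin n), X.card ≤ m →
          qb G p (X \ B) * Yc X ≤ qb G p X * Yc (X \ B) := by
        intro B
        induction B using Finset.induction_on with
        | empty => intro X _; rw [Finset.sdiff_empty]
        | insert _ _ hb =>
          rename_i b B IHB
          intro X hX
          have hXb : X \ insert b B = (X \ B).erase b := by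
            ext x
            simp only [Finset.mem_sdiff, Finset.mem_insert, Finset.mem_erase]
            tauto
          by_cases hbX : b ∈ X \ B
          · have hcard : (X \ B).card ≤ m :=
              le_trans (Finset.card_le_card (Finset.sdiff_subset)) hX
            have h1 := (IH (X \ B) hcard).2 b hbX
            have h2 := IHB X hX
            have hpos1 : 0 < qb G p (X \ B) := (IH (X \ B) hcard).1
            have hpos2 : 0 < qb G p ((X \ B).erase b) :=
              (IH ((X \ B).erase b) (le_trans (Finset.card_le_card (Finset.erase_subset _ _))
                hcard)).1
            rw [hXb]
            nlinarith [hYcpos X, hYcpos (X \ B), hYcpos ((X \ B).erase b),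
              mul_le_mul h1 h2 (mul_nonneg hpos1.le (hYcpos X).le)
                (mul_nonneg hpos1.le (hYcpos ((X \ B).erase b)).le)]
          · rw [hXb, Finset.erase_eq_of_notMem hbX]
            exact IHB X hX
      intro S hS
      by_cases hSm : S.card ≤ m
      · exact IH S hSm
      have hcard : S.card = m + 1 := le_antisymm hS (not_le.1 hSm)
      -- ratio part
      have ratio : ∀ a ∈ S, Yc S * qb G p (S.erase a) ≤ qb G p S * Yc (S.erase a) := by
        intro a ha
        set T := S.erase a with hT
        have hTcard : T.card = m := by rw [hT, Finset.card_erase_of_mem ha, hcard]; omega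
        have hTm : T.card ≤ m := le_of_eq hTcard
        have hqT : 0 < qb G p T := (IH T hTm).1
        set U := S \ Gp G a with hU
        have hUT : U = T \ G.neighborFinset a := sdiff_Gp G S a
        -- telescoping: qb U * Yc T ≤ qb T * Yc U
        have htel : qb G p U * Yc T ≤ qb G p T * Yc U := by
          rw [hUT]; exact tele _ T hTm
        -- Y recursion: Yc T = Yc S + y a * Yf ((univ \ S) \ N a)
        have hYrec : Yc T = Yc S + y a * Yf G y ((Finset.univ \ S) \ G.neighborFinset a) := by
          rw [hYc]
          simp only
          rw [compl_erase ha, Yf_insert G y (by simp [ha])]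
        -- key bound: p a * Yc U ≤ y a * Yf ((univ \ S) \ N a)
        have hkey : p a * Yc U ≤ y a * Yf G y ((Finset.univ \ S) \ G.neighborFinset a) := by
          have hYG : 0 < Yf G y (Gp G a) := Yf_pos G hy _
          have hsub : (Finset.univ \ U : Finset (Fin n)) ⊆
              Gp G a ∪ ((Finset.univ \ S) \ G.neighborFinset a) := by
            intro x hx
            simp only [hU, Gp, Finset.mem_sdiff, Finset.mem_univ, true_and, Finset.mem_union,
              Finset.mem_insert, SimpleGraph.mem_neighborFinset, not_and, not_not] at hx ⊢
            by_cases hxS : x ∈ S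
            · left; exact hx hxS
            · by_cases hxN : G.Adj a x
              · left; right; exact hxN
              · right; exact ⟨hxS, hxN⟩
          have h1 : Yc U ≤ Yf G y (Gp G a) *
              Yf G y ((Finset.univ \ S) \ G.neighborFinset a) :=
            le_trans (Yf_mono G (fun i => (hy i).le) hsub) (Yf_submul G (fun i => (hy i).le) _ _)
          calc p a * Yc U ≤ (y a / Yf G y (Gp G a)) * (Yf G y (Gp G a) *
                Yf G y ((Finset.univ \ S) \ G.neighborFinset a)) := by
                exact mul_le_mul (hcl a) h1 (hYcpos U).le (div_nonneg (hy a).le hYG.le)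
            _ = y a * Yf G y ((Finset.univ \ S) \ G.neighborFinset a) := by
                field_simp
        -- assemble
        have hrec : qb G p S = qb G p T - p a * qb G p U := qb_rec G p ha
        have h2 : Yc S ≤ Yc T - p a * Yc U := by
          rw [hYrec]; linarith
        rw [hrec]
        nlinarith [mul_le_mul_of_nonneg_left htel (hp a).le,
          mul_le_mul_of_nonneg_right h2 hqT.le, hYcpos T, hYcpos S]
      -- positivity from ratio
      obtain ⟨a, ha⟩ := Finset.card_pos.1 (by omega : 0 < S.card)
      have hqT : 0 < qb G p (S.erase a) :=
        (IH _ (by rw [Finset.card_erase_of_mem ha, hcard]; omega)).1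
      have h := ratio a ha
      have hpos : 0 < qb G p S := by
        nlinarith [hYcpos S, hYcpos (S.erase a)]
      exact ⟨hpos, ratio⟩
  have keyall : ∀ S : Finset (Fin n), 0 < qb G p S ∧
      ∀ a ∈ S, Yc S * qb G p (S.erase a) ≤ qb G p S * Yc (S.erase a) :=
    fun S => key S.card S le_rfl
  refine ⟨fun S a ha => ?_, fun S => (keyall S).1⟩
  rw [ge_iff_le, div_le_div_iff₀ (hYcpos (S.erase a)) (keyall (S.erase a)).1]
  calc Yf G y (Finset.univ \ S) * qb G p (S.erase a)
      ≤ qb G p S * Yf G y (Finset.univ \ S.erase a) := (keyall S).2 a ha
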